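/- (Theorem 1, over-reporting direction.) Let π0, π1 : [0,1] → [0,1] be a proper binarized scoring rule, let the agent have actual belief μ ∈ (0,1), influenced belief μ̂ ∈ (0,1) with μ̂ > μ, and state-dependent utilities with Δu0 > 0 and Δu1 > 0, and suppose the report p ∈ (0,1) is optimal for her (V(p) ≥ V(r) for all r ∈ [0,1]). Then p > μ if and only if EU(A) > EU(B). -/

import Mathlib

open Filter Topology

theorem overreport_iff_risky
    (pi0 pi1 : ℝ → ℝ)
    (hpi0 : ∀ r ∈ Set.Icc (0:ℝ) 1, pi0 r ∈ Set.Icc (0:ℝ) 1)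
    (hpi1 : ∀ r ∈ Set.Icc (0:ℝ) 1, pi1 r ∈ Set.Icc (0:ℝ) 1)
    (hproper : ∀ q ∈ Set.Icc (0:ℝ) 1, ∀ r ∈ Set.Icc (0:ℝ) 1, r ≠ q →
      (1 - q) * pi0 r + q * pi1 r < (1 - q) * pi0 q + q * pi1 q)
    (μ : ℝ) (hμ : μ ∈ Set.Ioo (0:ℝ) 1)
    (u0l u0h u1l u1h : ℝ) (hu0 : u0l < u0h) (hu1 : u1l < u1h)
    (ν : ℝ) (hν : ν ∈ Set.Ioo (0:ℝ) 1)
    (h : μ < ν)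
    (p : ℝ) (hp : p ∈ Set.Ioo (0:ℝ) 1)
    (hopt : ∀ r ∈ Set.Icc (0:ℝ) 1,
      (1 - μ) * (pi0 r * u0h + (1 - pi0 r) * u0l) + μ * (pi1 r * u1h + (1 - pi1 r) * u1l) ≤
      (1 - μ) * (pi0 p * u0h + (1 - pi0 p) * u0l) + μ * (pi1 p * u1h + (1 - pi1 p) * u1l))
    : p > μ ↔ (1/2) * ((1 - μ) * u0l + μ * u1l) + (1/2) * ((1 - ν) * u0h + ν * u1h) > (1/2) * ((1 - μ) * u0h + μ * u1h) + (1/2) * ((1 - ν) * u0l + ν * u1l) := by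
  obtain ⟨hμ0, hμ1⟩ := hμ
  obtain ⟨hp0, hp1⟩ := hp
  set Δ0 := u0h - u0l with hΔ0def
  set Δ1 := u1h - u1l with hΔ1def
  have hΔ0 : 0 < Δ0 := by simp [hΔ0def]; linarith
  have hΔ1 : 0 < Δ1 := by simp [hΔ1def]; linarith
  set D := (1 - μ) * Δ0 + μ * Δ1 with hDdef
  have hD : 0 < D := by
    have : 0 < (1 - μ) * Δ0 := mul_pos (by linarith) hΔ0
    have : 0 < μ * Δ1 := mul_pos hμ0 hΔ1
    nlinarith
  set q := μ * Δ1 / D with hqdef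
  have hq0 : 0 < q := div_pos (mul_pos hμ0 hΔ1) hD
  have hq1 : q ≤ 1 := by
    rw [hqdef, div_le_one hD]
    nlinarith [mul_pos (sub_pos.2 hμ1) hΔ0]
  have hqIcc : q ∈ Set.Icc (0:ℝ) 1 := ⟨le_of_lt hq0, hq1⟩
  have hpIcc : p ∈ Set.Icc (0:ℝ) 1 := ⟨le_of_lt hp0, le_of_lt hp1⟩
  have hDq : D * q = μ * Δ1 := by
    rw [hqdef, mul_div_assoc', mul_div_cancel_left₀ _ hD.ne']
  have hD1q : D * (1 - q) = (1 - μ) * Δ0 := by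
    have e : D * (1 - q) = D - D * q := by ring
    rw [e, hDq, hDdef]; ring
  have hpq : p = q := by
    by_contra hne
    have hprop := hproper q hqIcc p hpIcc hne
    have hmul := mul_lt_mul_of_pos_left hprop hD
    have e1 : ∀ r, D * ((1 - q) * pi0 r + q * pi1 r)
        = (1 - μ) * Δ0 * pi0 r + μ * Δ1 * pi1 r := fun r => by
      linear_combination pi0 r * hD1q + pi1 r * hDq
    rw [e1 p, e1 q] at hmul
    have hlt : (1 - μ) * Δ0 * pi0 p + μ * Δ1 * pi1 p <
        (1 - μ) * Δ0 * pi0 q + μ * Δ1 * pi1 q := hmul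
    have hle := hopt q hqIcc
    simp only [hΔ0def, hΔ1def] at hlt
    nlinarith [hle, hlt]
  have key : (p > μ) ↔ Δ0 < Δ1 := by
    rw [hpq, hqdef]
    rw [gt_iff_lt, lt_div_iff₀ hD]
    constructor
    · intro hlt
      by_contra hge
      push_neg at hge
      nlinarith [hDdef, mul_nonneg (le_of_lt (mul_pos hμ0 (sub_pos.2 hμ1)))
        (by linarith : (0:ℝ) ≤ Δ0 - Δ1)]
    · intro hlt
      nlinarith [hDdef, mul_pos (mul_pos hμ0 (sub_pos.2 hμ1)) (sub_pos.2 hlt)]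
  rw [key]
  constructor
  · intro hlt
    simp only [hΔ0def, hΔ1def] at hlt
    nlinarith [mul_pos (sub_pos.2 h) (sub_pos.2 h)]
  · intro hlt
    simp only [hΔ0def, hΔ1def]
    nlinarith [sub_pos.2 h]
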